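/- arXiv:2205.03570 — 4 statements merged into one kernel-verified Lean document; each statement's English description precedes it below -/
import Mathlib

section
/- Let (x, y, s) ∈ int(C), let (Δx, Δy, Δs) satisfy the scaled Newton system with D = I and some ν ∈ ℝ, and set Δx̂ = T_x^{−1} Δx, Δŝ = T_x Δs, and z(α) = T_x^{−1} x(α) ∘ T_x s(α) − μ(α) e, where μ(α) = x(α)ᵀ s(α)/k. Then for every α ∈ ℝ: z(α) = (1−α)(w_{xs} − μ e) + α (W_{xs} − R_{xs}) Δx̂ + α² (Δx̂ ∘ Δŝ). -/
open scoped BigOperators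
open Matrix

namespace SOCP

/-- Index type for a block vector with `k` blocks, block `i` having dimension `d i + 1`. -/
abbrev Idx {k : ℕ} (d : Fin k → ℕ) : Type := (i : Fin k) × Fin (d i + 1)

/-- The `i`-th block of a block vector. -/
def blk {k : ℕ} {d : Fin k → ℕ} (v : Idx d → ℝ) (i : Fin k) : Fin (d i + 1) → ℝ :=
  fun j => v ⟨i, j⟩

/-- Squared Euclidean norm of the tail `u_{2:m}` of a single block. -/
def tailNormSq {m : ℕ} (u : Fin (m + 1) → ℝ) : ℝ := ∑ j : Fin m, u j.succ ^ 2

/-- Euclidean norm of the tail `u_{2:m}` of a single block. -/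
noncomputable def tailNorm {m : ℕ} (u : Fin (m + 1) → ℝ) : ℝ := Real.sqrt (tailNormSq u)

/-- Membership in the cone `K` (a direct product of second-order cones). -/
def inK {k : ℕ} {d : Fin k → ℕ} (v : Idx d → ℝ) : Prop :=
  ∀ i : Fin k, tailNorm (blk v i) ≤ v ⟨i, 0⟩

/-- Membership in the interior of the cone `K`. -/
def inIntK {k : ℕ} {d : Fin k → ℕ} (v : Idx d → ℝ) : Prop :=
  ∀ i : Fin k, tailNorm (blk v i) < v ⟨i, 0⟩

/-- Euclidean inner product of vectors. -/
def dotV {ι : Type*} [Fintype ι] (u v : ι → ℝ) : ℝ := ∑ a, u a * v a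

/-- Euclidean norm of a vector. -/
noncomputable def vnorm {ι : Type*} [Fintype ι] (v : ι → ℝ) : ℝ :=
  Real.sqrt (∑ a, v a ^ 2)

/-- Blockwise Jordan product. -/
def jmul {k : ℕ} {d : Fin k → ℕ} (u v : Idx d → ℝ) : Idx d → ℝ := fun a =>
  if a.2 = 0 then ∑ j, u ⟨a.1, j⟩ * v ⟨a.1, j⟩
  else u ⟨a.1, 0⟩ * v a + v ⟨a.1, 0⟩ * u a

/-- The unit element `e` of the Jordan algebra. -/
def unitE {k : ℕ} {d : Fin k → ℕ} : Idx d → ℝ := fun a => if a.2 = 0 then 1 else 0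

/-- `λ_min` of the `i`-th block. -/
noncomputable def lamMin {k : ℕ} {d : Fin k → ℕ} (v : Idx d → ℝ) (i : Fin k) : ℝ :=
  v ⟨i, 0⟩ - tailNorm (blk v i)

/-- `λ_max` of the `i`-th block. -/
noncomputable def lamMax {k : ℕ} {d : Fin k → ℕ} (v : Idx d → ℝ) (i : Fin k) : ℝ :=
  v ⟨i, 0⟩ + tailNorm (blk v i)

/-- Arrow-head matrix of a single block. -/
def arrowBlk {m : ℕ} (u : Fin (m + 1) → ℝ) : Matrix (Fin (m + 1)) (Fin (m + 1)) ℝ :=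
  Matrix.of fun j j' =>
    if j = 0 then u j' else if j' = 0 then u j else if j = j' then u 0 else 0

/-- Arrow-head matrix `mat(v)` (block diagonal). -/
def matV {k : ℕ} {d : Fin k → ℕ} (v : Idx d → ℝ) : Matrix (Idx d) (Idx d) ℝ :=
  Matrix.blockDiagonal' fun i => arrowBlk (blk v i)

/-- `β_u = sqrt(u_1^2 - ‖u_{2:m}‖^2)` for a single block. -/
noncomputable def betaOf {m : ℕ} (u : Fin (m + 1) → ℝ) : ℝ :=
  Real.sqrt (u 0 ^ 2 - tailNormSq u)

/-- The matrix `T_u` for a single block. -/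
noncomputable def Tblk {m : ℕ} (u : Fin (m + 1) → ℝ) :
    Matrix (Fin (m + 1)) (Fin (m + 1)) ℝ :=
  Matrix.of fun j j' =>
    if j = 0 then u j'
    else if j' = 0 then u j
    else (if j = j' then betaOf u else 0) + u j * u j' / (betaOf u + u 0)

/-- The matrix `T_x` (block diagonal). -/
noncomputable def TV {k : ℕ} {d : Fin k → ℕ} (x : Idx d → ℝ) :
    Matrix (Idx d) (Idx d) ℝ :=
  Matrix.blockDiagonal' fun i => Tblk (blk x i)

/-- `w_{xs} = T_x s`. -/
noncomputable def wxs {k : ℕ} {d : Fin k → ℕ} (x s : Idx d → ℝ) : Idx d → ℝ :=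
  (TV x).mulVec s

/-- Central-path coefficient `μ(x,s) = xᵀs/k`. -/
noncomputable def muV {k : ℕ} {d : Fin k → ℕ} (x s : Idx d → ℝ) : ℝ :=
  dotV x s / (k : ℝ)

/-- Central-path distance `d_2(x,s) = √2 ‖w_{xs} - μ e‖`. -/
noncomputable def d2 {k : ℕ} {d : Fin k → ℕ} (x s : Idx d → ℝ) : ℝ :=
  Real.sqrt 2 * vnorm (wxs x s - muV x s • unitE)

/-- Central-path distance `d_∞(x,s)`. -/
noncomputable def dInf {k : ℕ} {d : Fin k → ℕ} (x s : Idx d → ℝ) : ℝ :=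
  ⨆ i : Fin k, max |lamMax (wxs x s) i - muV x s| |lamMin (wxs x s) i - muV x s|

/-- The matrix `Q = diag(1, -I)` for a single block. -/
def Qblk {m : ℕ} : Matrix (Fin (m + 1)) (Fin (m + 1)) ℝ :=
  Matrix.of fun j j' => if j = j' then (if j = 0 then (1 : ℝ) else -1) else 0

/-- The scaling group `G` of block matrices `Θ G` with `(Gⁱ)ᵀ Qⁱ Gⁱ = Qⁱ`. -/
def scalingGroup {k : ℕ} (d : Fin k → ℕ) : Set (Matrix (Idx d) (Idx d) ℝ) :=
  { D | ∃ (θ : Fin k → ℝ) (G : ∀ i, Matrix (Fin (d i + 1)) (Fin (d i + 1)) ℝ),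
      (∀ i, 0 < θ i) ∧ (∀ i, (G i)ᵀ * Qblk * G i = Qblk) ∧
      D = Matrix.blockDiagonal' fun i => θ i • G i }

/-- Operator 2-norm of a matrix. -/
noncomputable def op2 {m n : Type*} [Fintype m] [Fintype n] [DecidableEq n]
    (M : Matrix m n ℝ) : ℝ :=
  ‖LinearMap.toContinuousLinearMap (Matrix.toEuclideanLin M)‖

/-- `R_{xs} = T_x X⁻¹ S T_x`. -/
noncomputable def Rxs {k : ℕ} {d : Fin k → ℕ} (x s : Idx d → ℝ) :
    Matrix (Idx d) (Idx d) ℝ :=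
  TV x * (matV x)⁻¹ * matV s * TV x

/-- The scaled Newton system of the infeasible IPM (Monteiro–Zhang family). -/
def NewtonSys {k p : ℕ} {d : Fin k → ℕ} (A : Matrix (Fin p) (Idx d) ℝ)
    (Cm : Matrix (Idx d) (Idx d) ℝ) (x : Idx d → ℝ) (y : Fin p → ℝ) (s : Idx d → ℝ)
    (ν : ℝ) (D : Matrix (Idx d) (Idx d) ℝ)
    (dx : Idx d → ℝ) (dy : Fin p → ℝ) (ds : Idx d → ℝ) : Prop :=
  A.mulVec dx = -((1 - ν) • A.mulVec x) ∧
  Aᵀ.mulVec dy + Cm.mulVec dx + ds =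
    -((1 - ν) • (Aᵀ.mulVec y + Cm.mulVec x + s)) ∧
  (matV ((D⁻¹)ᵀ.mulVec x)).mulVec (D.mulVec ds)
      + (matV (D.mulVec s)).mulVec ((D⁻¹)ᵀ.mulVec dx)
    = (ν * muV x s) • unitE - jmul ((D⁻¹)ᵀ.mulVec x) (D.mulVec s)

/-- Central-path neighborhood `N_2(γ)`. -/
def N2 {k : ℕ} (d : Fin k → ℕ) (p : ℕ) (γ : ℝ) :
    Set ((Idx d → ℝ) × (Fin p → ℝ) × (Idx d → ℝ)) :=
  { z | inIntK z.1 ∧ inIntK z.2.2 ∧ d2 z.1 z.2.2 ≤ γ * muV z.1 z.2.2 }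

/-- Central-path neighborhood `N_∞(γ)`. -/
def NInf {k : ℕ} (d : Fin k → ℕ) (p : ℕ) (γ : ℝ) :
    Set ((Idx d → ℝ) × (Fin p → ℝ) × (Idx d → ℝ)) :=
  { z | inIntK z.1 ∧ inIntK z.2.2 ∧ dInf z.1 z.2.2 ≤ γ * muV z.1 z.2.2 }

/-- The matrix `U_u` for a single block: zero first row and column and lower-right block
`(u_1 - β_u) P_u`, with `P_u` the projection onto the complement of the tail of `u`
(zero when the tail vanishes). -/
noncomputable def Ublk {m : ℕ} (u : Fin (m + 1) → ℝ) :
    Matrix (Fin (m + 1)) (Fin (m + 1)) ℝ :=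
  Matrix.of fun j j' =>
    if j = 0 ∨ j' = 0 then 0
    else if tailNormSq u = 0 then 0
    else (u 0 - betaOf u) * ((if j = j' then (1 : ℝ) else 0) - u j * u j' / tailNormSq u)

/-- The block-diagonal matrix `U_x`. -/
noncomputable def UV {k : ℕ} {d : Fin k → ℕ} (x : Idx d → ℝ) :
    Matrix (Idx d) (Idx d) ℝ :=
  Matrix.blockDiagonal' fun i => Ublk (blk x i)

/-- `Γ_p = 2 (γ²/2 + (1-ν)² k)^{1/2} / (1 - 3γ)`. -/
noncomputable def GammaP (γ ν : ℝ) (k : ℕ) : ℝ :=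
  2 * Real.sqrt (γ ^ 2 / 2 + (1 - ν) ^ 2 * k) / (1 - 3 * γ)

/-- `Γ̃ = (4(γ² + δ²)/(1-3γ)²) (1 - δ/√(2k))⁻¹`. -/
noncomputable def GammaTilde (γ δ : ℝ) (k : ℕ) : ℝ :=
  4 * (γ ^ 2 + δ ^ 2) / (1 - 3 * γ) ^ 2 * (1 - δ / Real.sqrt (2 * k))⁻¹

noncomputable def jinvBlk {m : ℕ} (u : Fin (m + 1) → ℝ) : Fin (m + 1) → ℝ :=
  fun j => (if j = 0 then u 0 else -u j) / (u 0 ^ 2 - tailNormSq u)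

noncomputable def TinvBlk {m : ℕ} (u : Fin (m + 1) → ℝ) :
    Matrix (Fin (m + 1)) (Fin (m + 1)) ℝ :=
  Matrix.of fun j j' =>
    if j = 0 then jinvBlk u j'
    else if j' = 0 then jinvBlk u j
    else ((if j = j' then betaOf u else 0) + u j * u j' / (betaOf u + u 0))
          / (u 0 ^ 2 - tailNormSq u)

noncomputable def XinvBlk {m : ℕ} (u : Fin (m + 1) → ℝ) :
    Matrix (Fin (m + 1)) (Fin (m + 1)) ℝ :=
  Matrix.of fun j j' =>
    if j = 0 then jinvBlk u j'
    else if j' = 0 then jinvBlk u j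
    else (if j = j' then (1 : ℝ) else 0) / u 0
          + u j * u j' / u 0 / (u 0 ^ 2 - tailNormSq u)

lemma sum_expand {m : ℕ} (t : Fin m → ℝ) (p p' : Fin m) (a b e f : ℝ) :
    ∑ q, ((if p = q then a else 0) + e * t q) * ((if q = p' then b else 0) + f * t q)
      = (if p = p' then a * b else 0) + a * f * t p + e * b * t p'
        + e * f * ∑ q, t q ^ 2 := by
  have : ∀ q : Fin m,
      ((if p = q then a else 0) + e * t q) * ((if q = p' then b else 0) + f * t q)
      = (if p = q then (if q = p' then a * b else 0) else 0)
        + (if p = q then a * f * t q else 0)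
        + (if q = p' then e * b * t q else 0)
        + e * f * t q ^ 2 := by
    intro q; split_ifs <;> ring
  rw [Finset.sum_congr rfl fun q _ => this q]
  simp [Finset.sum_add_distrib, Finset.mul_sum]

section Block
variable {m : ℕ} (u : Fin (m + 1) → ℝ)

lemma tsq_nonneg : 0 ≤ tailNormSq u := Finset.sum_nonneg fun _ _ => sq_nonneg _

lemma u0_pos (h : tailNorm u < u 0) : 0 < u 0 := lt_of_le_of_lt (Real.sqrt_nonneg _) h

lemma det_pos (h : tailNorm u < u 0) : 0 < u 0 ^ 2 - tailNormSq u := by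
  have h1 := tsq_nonneg u
  have h2 : tailNorm u ^ 2 = tailNormSq u := Real.sq_sqrt h1
  have h3 : 0 ≤ tailNorm u := Real.sqrt_nonneg _
  nlinarith [h]

lemma beta_sq (h : tailNorm u < u 0) : betaOf u ^ 2 = u 0 ^ 2 - tailNormSq u :=
  Real.sq_sqrt (det_pos u h).le

lemma beta_pos (h : tailNorm u < u 0) : 0 < betaOf u := Real.sqrt_pos.mpr (det_pos u h)

lemma Tblk_mul_TinvBlk (h : tailNorm u < u 0) : Tblk u * TinvBlk u = 1 := by
  have hD : u 0 ^ 2 - tailNormSq u ≠ 0 := (det_pos u h).ne'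
  have hb2 := beta_sq u h
  have hb := (beta_pos u h)
  have h0 := u0_pos u h
  have hc : betaOf u + u 0 ≠ 0 := by positivity
  ext j j'
  rw [Matrix.mul_apply, Fin.sum_univ_succ]
  rcases Fin.eq_zero_or_eq_succ j with rfl | ⟨p, rfl⟩ <;>
    rcases Fin.eq_zero_or_eq_succ j' with rfl | ⟨p', rfl⟩
  · -- (0,0)
    simp only [Tblk, TinvBlk, jinvBlk, Matrix.of_apply, Matrix.one_apply,
      if_pos rfl, Fin.succ_ne_zero, if_false, if_true]
    have : ∀ q : Fin m, u q.succ * (-u q.succ / (u 0 ^ 2 - tailNormSq u))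
        = u q.succ ^ 2 * (-1 / (u 0 ^ 2 - tailNormSq u)) := fun q => by ring
    rw [Finset.sum_congr rfl fun q _ => this q, ← Finset.sum_mul]
    show u 0 * (u 0 / _) + tailNormSq u * _ = 1
    field_simp
    ring
  · -- (0, succ)
    simp only [Tblk, TinvBlk, jinvBlk, Matrix.of_apply, Matrix.one_apply,
      if_pos rfl, Fin.succ_ne_zero, if_false, if_true,
      (Fin.succ_ne_zero p').symm, Fin.succ_inj]
    rw [show (∑ x : Fin m, u x.succ *
          (((if x = p' then betaOf u else 0) + u x.succ * u p'.succ / (betaOf u + u 0)) /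
            (u 0 ^ 2 - tailNormSq u)))
        = ∑ x : Fin m, ((if p' = x then (0:ℝ) else 0) + 1 * u x.succ) *
            ((if x = p' then betaOf u / (u 0 ^ 2 - tailNormSq u) else 0) +
              u p'.succ / (betaOf u + u 0) / (u 0 ^ 2 - tailNormSq u) * u x.succ)
      from Finset.sum_congr rfl fun q _ => by split_ifs <;> ring, sum_expand,
      show (∑ x : Fin m, u x.succ ^ 2) = tailNormSq u from rfl]
    have htq : tailNormSq u = u 0 ^ 2 - betaOf u ^ 2 := by linarith [hb2]
    rw [htq]
    have hbne := hb.ne'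
    simp only [eq_self_iff_true, if_true]
    field_simp
    ring
  · simp only [Tblk, TinvBlk, jinvBlk, Matrix.of_apply, Matrix.one_apply,
      if_pos rfl, Fin.succ_ne_zero, if_false, if_true, Fin.succ_inj]
    rw [show (∑ x : Fin m,
          ((if p = x then betaOf u else 0) + u p.succ * u x.succ / (betaOf u + u 0)) *
            (-u x.succ / (u 0 ^ 2 - tailNormSq u)))
        = ∑ x : Fin m, ((if p = x then betaOf u else 0) + u p.succ / (betaOf u + u 0) * u x.succ) *
            ((if x = p then (0:ℝ) else 0) + -1 / (u 0 ^ 2 - tailNormSq u) * u x.succ)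
      from Finset.sum_congr rfl fun q _ => by split_ifs <;> ring, sum_expand,
      show (∑ x : Fin m, u x.succ ^ 2) = tailNormSq u from rfl]
    have htq : tailNormSq u = u 0 ^ 2 - betaOf u ^ 2 := by linarith [hb2]
    rw [htq]
    have hbne := hb.ne'
    simp only [eq_self_iff_true, if_true]
    field_simp
    ring
  · simp only [Tblk, TinvBlk, jinvBlk, Matrix.of_apply, Matrix.one_apply,
      if_pos rfl, Fin.succ_ne_zero, if_false, if_true, Fin.succ_inj]
    rw [show (∑ x : Fin m,
          ((if p = x then betaOf u else 0) + u p.succ * u x.succ / (betaOf u + u 0)) *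
            (((if x = p' then betaOf u else 0) + u x.succ * u p'.succ / (betaOf u + u 0)) /
              (u 0 ^ 2 - tailNormSq u)))
        = ∑ x : Fin m, ((if p = x then betaOf u else 0) + u p.succ / (betaOf u + u 0) * u x.succ) *
            ((if x = p' then betaOf u / (u 0 ^ 2 - tailNormSq u) else 0) +
              u p'.succ / (betaOf u + u 0) / (u 0 ^ 2 - tailNormSq u) * u x.succ)
      from Finset.sum_congr rfl fun q _ => by split_ifs <;> ring, sum_expand,
      show (∑ x : Fin m, u x.succ ^ 2) = tailNormSq u from rfl]
    have htq : tailNormSq u = u 0 ^ 2 - betaOf u ^ 2 := by linarith [hb2]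
    rw [htq]
    have hbne := hb.ne'
    rcases eq_or_ne p p' with rfl | hne
    · simp only [if_pos rfl]
      simp only [eq_self_iff_true, if_true]
      field_simp
      ring
    · simp only [if_neg hne]
      field_simp
      ring


lemma arrowBlk_mul_XinvBlk (h : tailNorm u < u 0) : arrowBlk u * XinvBlk u = 1 := by
  have hD : u 0 ^ 2 - tailNormSq u ≠ 0 := (det_pos u h).ne'
  have h0 := (u0_pos u h).ne'
  ext j j'
  rw [Matrix.mul_apply, Fin.sum_univ_succ]
  rcases Fin.eq_zero_or_eq_succ j with rfl | ⟨p, rfl⟩ <;>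
    rcases Fin.eq_zero_or_eq_succ j' with rfl | ⟨p', rfl⟩
  · simp only [arrowBlk, XinvBlk, jinvBlk, Matrix.of_apply, Matrix.one_apply,
      if_pos rfl, Fin.succ_ne_zero, if_false, if_true, Fin.succ_inj]
    have : ∀ q : Fin m, u q.succ * (-u q.succ / (u 0 ^ 2 - tailNormSq u))
        = u q.succ ^ 2 * (-1 / (u 0 ^ 2 - tailNormSq u)) := fun q => by ring
    rw [Finset.sum_congr rfl fun q _ => this q, ← Finset.sum_mul]
    show u 0 * (u 0 / _) + tailNormSq u * _ = 1
    field_simp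
    ring
  · simp only [arrowBlk, XinvBlk, jinvBlk, Matrix.of_apply, Matrix.one_apply,
      if_pos rfl, Fin.succ_ne_zero, (Fin.succ_ne_zero p').symm, if_false, if_true, Fin.succ_inj]
    rw [show (∑ x : Fin m, u x.succ *
          ((if x = p' then (1:ℝ) else 0) / u 0 +
            u x.succ * u p'.succ / u 0 / (u 0 ^ 2 - tailNormSq u)))
        = ∑ x : Fin m, ((if p' = x then (0:ℝ) else 0) + 1 * u x.succ) *
            ((if x = p' then 1 / u 0 else 0) +
              u p'.succ / u 0 / (u 0 ^ 2 - tailNormSq u) * u x.succ)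
      from Finset.sum_congr rfl fun q _ => by split_ifs <;> ring, sum_expand,
      show (∑ x : Fin m, u x.succ ^ 2) = tailNormSq u from rfl]
    simp only [eq_self_iff_true, if_true]
    field_simp
    ring
  · simp only [arrowBlk, XinvBlk, jinvBlk, Matrix.of_apply, Matrix.one_apply,
      if_pos rfl, Fin.succ_ne_zero, if_false, if_true, Fin.succ_inj]
    rw [show (∑ x : Fin m, (if p = x then u 0 else 0) *
            (-u x.succ / (u 0 ^ 2 - tailNormSq u)))
        = ∑ x : Fin m, ((if p = x then u 0 else 0) + 0 * u x.succ) *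
            ((if x = p then (0:ℝ) else 0) + -1 / (u 0 ^ 2 - tailNormSq u) * u x.succ)
      from Finset.sum_congr rfl fun q _ => by split_ifs <;> ring, sum_expand,
      show (∑ x : Fin m, u x.succ ^ 2) = tailNormSq u from rfl]
    simp only [eq_self_iff_true, if_true]
    field_simp
    ring
  · simp only [arrowBlk, XinvBlk, jinvBlk, Matrix.of_apply, Matrix.one_apply,
      if_pos rfl, Fin.succ_ne_zero, if_false, if_true, Fin.succ_inj]
    rw [show (∑ x : Fin m, (if p = x then u 0 else 0) *
            ((if x = p' then (1:ℝ) else 0) / u 0 +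
              u x.succ * u p'.succ / u 0 / (u 0 ^ 2 - tailNormSq u)))
        = ∑ x : Fin m, ((if p = x then u 0 else 0) + 0 * u x.succ) *
            ((if x = p' then 1 / u 0 else 0) +
              u p'.succ / u 0 / (u 0 ^ 2 - tailNormSq u) * u x.succ)
      from Finset.sum_congr rfl fun q _ => by split_ifs <;> ring, sum_expand,
      show (∑ x : Fin m, u x.succ ^ 2) = tailNormSq u from rfl]
    rcases eq_or_ne p p' with rfl | hne
    · simp only [if_pos rfl]
      field_simp
      ring
    · simp only [if_neg hne]
      field_simp
      ring

lemma Tblk_col0 (j : Fin (m + 1)) : Tblk u j 0 = u j := by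
  rcases Fin.eq_zero_or_eq_succ j with rfl | ⟨p, rfl⟩ <;>
    simp [Tblk, Fin.succ_ne_zero]

lemma TinvBlk_col0 (j : Fin (m + 1)) : TinvBlk u j 0 = jinvBlk u j := by
  rcases Fin.eq_zero_or_eq_succ j with rfl | ⟨p, rfl⟩ <;>
    simp [TinvBlk, Fin.succ_ne_zero]

lemma XinvBlk_col0 (j : Fin (m + 1)) : XinvBlk u j 0 = jinvBlk u j := by
  rcases Fin.eq_zero_or_eq_succ j with rfl | ⟨p, rfl⟩ <;>
    simp [XinvBlk, Fin.succ_ne_zero]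

end Block

section Helpers
variable {k : ℕ} {d : Fin k → ℕ}

lemma bd_mulVec (M : ∀ i : Fin k, Matrix (Fin (d i + 1)) (Fin (d i + 1)) ℝ)
    (v : Idx d → ℝ) (a : Idx d) :
    (Matrix.blockDiagonal' M).mulVec v a = (M a.1).mulVec (blk v a.1) a.2 := by
  obtain ⟨i, j⟩ := a
  rw [Matrix.mulVec, dotProduct, ← Finset.univ_sigma_univ, Finset.sum_sigma]
  rw [Finset.sum_eq_single i]
  · rw [Matrix.mulVec, dotProduct]
    exact Finset.sum_congr rfl fun j' _ => by
      rw [Matrix.blockDiagonal'_apply_eq]; rfl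
  · intro i' _ hne
    apply Finset.sum_eq_zero
    intro j' _
    rw [Matrix.blockDiagonal'_apply_ne _ _ _ (Ne.symm hne), zero_mul]
  · intro hmem
    exact absurd (Finset.mem_univ i) hmem

lemma bd_mulVec_unitE (B : ∀ i : Fin k, Matrix (Fin (d i + 1)) (Fin (d i + 1)) ℝ)
    (a : Idx d) :
    (Matrix.blockDiagonal' B).mulVec unitE a = B a.1 a.2 0 := by
  rw [bd_mulVec, Matrix.mulVec, dotProduct, Fin.sum_univ_succ]
  simp [blk, unitE, Fin.succ_ne_zero]

lemma jmul_eq_mulVec (u v : Idx d → ℝ) : jmul u v = (matV u).mulVec v := by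
  funext a
  obtain ⟨i, j⟩ := a
  rw [matV, bd_mulVec]
  rcases Fin.eq_zero_or_eq_succ j with rfl | ⟨q, rfl⟩
  · rw [Matrix.mulVec, dotProduct]
    simp only [jmul, if_pos rfl, arrowBlk, Matrix.of_apply, blk]
    rfl
  · rw [Matrix.mulVec, dotProduct, Fin.sum_univ_succ]
    simp only [jmul, Fin.succ_ne_zero, if_false, arrowBlk, Matrix.of_apply, blk,
      Fin.succ_inj, if_true, if_pos rfl]
    rw [Finset.sum_congr rfl (fun q' (_ : q' ∈ Finset.univ) =>
      show (if q = q' then u ⟨i, 0⟩ else 0) * v ⟨i, q'.succ⟩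
          = if q = q' then u ⟨i, 0⟩ * v ⟨i, q'.succ⟩ else 0 from by split_ifs <;> ring)]
    rw [Finset.sum_ite_eq]
    simp
    ring

lemma jmul_comm (u v : Idx d → ℝ) : jmul u v = jmul v u := by
  funext a
  simp only [jmul]
  split_ifs
  · exact Finset.sum_congr rfl fun j _ => mul_comm _ _
  · ring

lemma jmul_add_right (u v w : Idx d → ℝ) : jmul u (v + w) = jmul u v + jmul u w := by
  funext a
  simp only [jmul, Pi.add_apply]
  split_ifs
  · rw [← Finset.sum_add_distrib]
    exact Finset.sum_congr rfl fun j _ => by ring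
  · ring

lemma jmul_smul_right (c : ℝ) (u v : Idx d → ℝ) : jmul u (c • v) = c • jmul u v := by
  funext a
  simp only [jmul, Pi.smul_apply, smul_eq_mul]
  split_ifs
  · rw [Finset.mul_sum]
    exact Finset.sum_congr rfl fun j _ => by ring
  · ring

lemma jmul_add_left (u v w : Idx d → ℝ) : jmul (u + v) w = jmul u w + jmul v w := by
  rw [jmul_comm, jmul_add_right, jmul_comm w u, jmul_comm w v]

lemma jmul_smul_left (c : ℝ) (u v : Idx d → ℝ) : jmul (c • u) v = c • jmul u v := by
  rw [jmul_comm, jmul_smul_right, jmul_comm v u]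

lemma jmul_unitE (v : Idx d → ℝ) : jmul unitE v = v := by
  funext a
  obtain ⟨i, j⟩ := a
  rcases Fin.eq_zero_or_eq_succ j with rfl | ⟨q, rfl⟩
  · simp only [jmul, if_pos rfl]
    rw [Fin.sum_univ_succ]
    simp [unitE, Fin.succ_ne_zero]
  · simp [jmul, unitE, Fin.succ_ne_zero]

lemma sum0_jmul (u v : Idx d → ℝ) :
    ∑ i : Fin k, jmul u v ⟨i, 0⟩ = dotV u v := by
  rw [dotV, ← Finset.univ_sigma_univ, Finset.sum_sigma]
  exact Finset.sum_congr rfl fun i _ => by simp [jmul]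

end Helpers

/-- Lemma 5: expansion of `z(α) = T_x⁻¹x(α) ∘ T_x s(α) - μ(α) e` for the unscaled
(`D = I`) search direction. -/
theorem z_alpha_expansion {k p : ℕ} {d : Fin k → ℕ} (hk : 0 < k)
    (A : Matrix (Fin p) (Idx d) ℝ) (hrank : A.rank = p)
    (Cm : Matrix (Idx d) (Idx d) ℝ) (hC : Cmᵀ = -Cm)
    (x s : Idx d → ℝ) (y : Fin p → ℝ) (hx : inIntK x) (hs : inIntK s)
    (ν : ℝ) (dx ds : Idx d → ℝ) (dy : Fin p → ℝ)
    (h1 : A.mulVec dx = -((1 - ν) • A.mulVec x))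
    (h2 : Aᵀ.mulVec dy + Cm.mulVec dx + ds
      = -((1 - ν) • (Aᵀ.mulVec y + Cm.mulVec x + s)))
    (h3 : (matV x).mulVec ds + (matV s).mulVec dx
      = (ν * muV x s) • unitE - jmul x s) :
    ∀ α : ℝ,
      jmul ((TV x)⁻¹.mulVec (x + α • dx)) ((TV x).mulVec (s + α • ds))
          - muV (x + α • dx) (s + α • ds) • unitE
        = (1 - α) • (wxs x s - muV x s • unitE)
          + α • (matV (wxs x s) - Rxs x s).mulVec ((TV x)⁻¹.mulVec dx)
          + α ^ 2 • jmul ((TV x)⁻¹.mulVec dx) ((TV x).mulVec ds) := by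
  -- basic per-block interiority
  have hxb : ∀ i : Fin k, tailNorm (blk x i) < blk x i 0 := fun i => hx i
  -- block-diagonal inverse matrices
  set Ti : Matrix (Idx d) (Idx d) ℝ :=
    Matrix.blockDiagonal' (fun i => TinvBlk (blk x i)) with hTi
  set Xi : Matrix (Idx d) (Idx d) ℝ :=
    Matrix.blockDiagonal' (fun i => XinvBlk (blk x i)) with hXi
  have hT1 : TV x * Ti = 1 := by
    rw [hTi, TV, ← Matrix.blockDiagonal'_mul]
    rw [show (fun i => Tblk (blk x i) * TinvBlk (blk x i))
        = (1 : ∀ i : Fin k, Matrix (Fin (d i + 1)) (Fin (d i + 1)) ℝ) from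
      funext fun i => Tblk_mul_TinvBlk (blk x i) (hxb i)]
    exact Matrix.blockDiagonal'_one
  have hX1 : matV x * Xi = 1 := by
    rw [hXi, matV, ← Matrix.blockDiagonal'_mul]
    rw [show (fun i => arrowBlk (blk x i) * XinvBlk (blk x i))
        = (1 : ∀ i : Fin k, Matrix (Fin (d i + 1)) (Fin (d i + 1)) ℝ) from
      funext fun i => arrowBlk_mul_XinvBlk (blk x i) (hxb i)]
    exact Matrix.blockDiagonal'_one
  have hT1' : Ti * TV x = 1 := mul_eq_one_comm.mp hT1
  have hX1' : Xi * matV x = 1 := mul_eq_one_comm.mp hX1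
  have hTinv : (TV x)⁻¹ = Ti := Matrix.inv_eq_right_inv hT1
  have hXinv : (matV x)⁻¹ = Xi := Matrix.inv_eq_right_inv hX1
  -- T e = x
  have hTe : (TV x).mulVec unitE = x := by
    funext a
    rw [TV, bd_mulVec_unitE, Tblk_col0]
    rfl
  -- Xi e = jinv vector, T (Xi e) = e
  have hXie : Xi.mulVec unitE = fun a : Idx d => jinvBlk (blk x a.1) a.2 := by
    funext a
    rw [hXi, bd_mulVec_unitE, XinvBlk_col0]
  have hTjx : (TV x).mulVec (fun a : Idx d => jinvBlk (blk x a.1) a.2) = unitE := by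
    funext a
    obtain ⟨i, j⟩ := a
    rw [TV, bd_mulVec]
    have hstep : (Tblk (blk x i)).mulVec
        (blk (fun a : Idx d => jinvBlk (blk x a.1) a.2) i) j
        = (Tblk (blk x i) * TinvBlk (blk x i)) j 0 := by
      rw [Matrix.mul_apply, Matrix.mulVec, dotProduct]
      exact Finset.sum_congr rfl fun j' _ => by rw [TinvBlk_col0]; rfl
    rw [hstep, Tblk_mul_TinvBlk (blk x i) (hxb i), Matrix.one_apply, unitE]
  -- dot product identities
  have hkne : (k : ℝ) ≠ 0 := Nat.cast_ne_zero.mpr hk.ne'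
  have hkmu : (k : ℝ) * muV x s = dotV x s := by
    rw [muV]; field_simp
  have h3c := h3
  rw [← jmul_eq_mulVec x ds, ← jmul_eq_mulVec s dx] at h3c
  have h3' := congrArg (fun q : Idx d → ℝ => ∑ i : Fin k, q ⟨i, 0⟩) h3c
  simp only [Pi.add_apply, Pi.sub_apply, Pi.smul_apply, smul_eq_mul,
    Finset.sum_add_distrib, Finset.sum_sub_distrib, sum0_jmul] at h3'
  have hE : ∑ i : Fin k, ν * muV x s * unitE ⟨i, (0 : Fin (d i + 1))⟩
      = (k : ℝ) * (ν * muV x s) := by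
    rw [Finset.sum_congr rfl (fun i _ => show ν * muV x s * unitE ⟨i, (0 : Fin (d i + 1))⟩
        = ν * muV x s from by simp [unitE])]
    rw [Finset.sum_const, Finset.card_univ, Fintype.card_fin, nsmul_eq_mul]
  rw [hE] at h3'
  have hdot1 : dotV x ds + dotV s dx = (ν - 1) * dotV x s := by
    rw [← hkmu]; linarith [h3']
  -- dx ⬝ ds = 0
  have hskew : ∀ w : Idx d → ℝ, w ⬝ᵥ Cm.mulVec w = 0 := by
    intro w
    have hw : w ⬝ᵥ Cm.mulVec w = -(w ⬝ᵥ Cm.mulVec w) := by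
      conv_lhs => rw [Matrix.dotProduct_mulVec,
        show w ᵥ* Cm = Cmᵀ.mulVec w from by
          rw [← Matrix.vecMul_transpose, Matrix.transpose_transpose],
        hC, Matrix.neg_mulVec, neg_dotProduct, dotProduct_comm]
    linarith
  have hCskew : ∀ w z : Idx d → ℝ, w ⬝ᵥ Cm.mulVec z = -(z ⬝ᵥ Cm.mulVec w) := by
    intro w z
    rw [Matrix.dotProduct_mulVec,
      show w ᵥ* Cm = Cmᵀ.mulVec w from by
        rw [← Matrix.vecMul_transpose, Matrix.transpose_transpose],
      hC, Matrix.neg_mulVec, neg_dotProduct, dotProduct_comm]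
  have hAt : ∀ (w : Idx d → ℝ) (z : Fin p → ℝ),
      w ⬝ᵥ Aᵀ.mulVec z = A.mulVec w ⬝ᵥ z := by
    intro w z
    rw [Matrix.dotProduct_mulVec, Matrix.vecMul_transpose]
  have e2dx := congrArg (fun q => dx ⬝ᵥ q) h2
  have e2x := congrArg (fun q => x ⬝ᵥ q) h2
  simp only [dotProduct_add, dotProduct_neg, dotProduct_smul,
    smul_eq_mul, hAt, h1, hskew, neg_dotProduct, smul_dotProduct] at e2dx e2x
  rw [hCskew x dx] at e2x
  have hdot1' : x ⬝ᵥ ds + s ⬝ᵥ dx = (ν - 1) * (x ⬝ᵥ s) := hdot1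
  have hds : dx ⬝ᵥ s = s ⬝ᵥ dx := dotProduct_comm _ _
  have hdot2 : dotV dx ds = 0 := by
    show dx ⬝ᵥ ds = 0
    linear_combination e2dx + (1 - ν) * e2x - (1 - ν) * hdot1' - (1 - ν) * hds
  -- mu expansion
  have hmu : ∀ α : ℝ, muV (x + α • dx) (s + α • ds) = (1 + α * (ν - 1)) * muV x s := by
    intro α
    rw [muV, muV]
    have hexp : dotV (x + α • dx) (s + α • ds)
        = dotV x s + α * (dotV x ds + dotV s dx) + α ^ 2 * dotV dx ds := by
      simp only [dotV, Pi.add_apply, Pi.smul_apply, smul_eq_mul]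
      rw [Finset.sum_congr rfl (fun a (_ : a ∈ Finset.univ) =>
        show (x a + α * dx a) * (s a + α * ds a)
            = x a * s a + α * (x a * ds a + s a * dx a) + α ^ 2 * (dx a * ds a) from by ring)]
      simp [Finset.sum_add_distrib, Finset.mul_sum, mul_add]
    rw [hexp, hdot1, hdot2]
    ring
  -- the key identity
  have hR : (Rxs x s).mulVec (Ti.mulVec dx)
      = (TV x).mulVec (Xi.mulVec ((matV s).mulVec dx)) := by
    rw [Rxs, hXinv, Matrix.mulVec_mulVec, Matrix.mul_assoc (TV x * Xi * matV s) (TV x) Ti,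
      hT1, mul_one, ← Matrix.mulVec_mulVec, ← Matrix.mulVec_mulVec]
  have h3m := h3
  rw [jmul_eq_mulVec x s] at h3m
  have hkey : (TV x).mulVec ds + wxs x s + (Rxs x s).mulVec (Ti.mulVec dx)
      = (ν * muV x s) • unitE := by
    rw [hR,
      show (TV x).mulVec ds = (TV x).mulVec (Xi.mulVec ((matV x).mulVec ds)) from by
        rw [Matrix.mulVec_mulVec ds Xi (matV x), hX1', Matrix.one_mulVec],
      show wxs x s = (TV x).mulVec (Xi.mulVec ((matV x).mulVec s)) from by
        rw [Matrix.mulVec_mulVec s Xi (matV x), hX1', Matrix.one_mulVec]; rfl,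
      show ∀ a b c : Idx d → ℝ,
          (TV x).mulVec (Xi.mulVec a) + (TV x).mulVec (Xi.mulVec b)
            + (TV x).mulVec (Xi.mulVec c) = (TV x).mulVec (Xi.mulVec (a + b + c)) from by
        intro a b c; simp [Matrix.mulVec_add],
      show (matV x).mulVec ds + (matV x).mulVec s + (matV s).mulVec dx
          = (ν * muV x s) • unitE from by
        rw [add_right_comm, h3m, sub_add_cancel],
      Matrix.mulVec_smul, Matrix.mulVec_smul, hXie, hTjx]
  -- final assembly
  intro α
  have hxhat : Ti.mulVec (x + α • dx) = unitE + α • Ti.mulVec dx := by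
    rw [Matrix.mulVec_add, Matrix.mulVec_smul, ← hTe,
      Matrix.mulVec_mulVec unitE Ti (TV x), hT1', Matrix.one_mulVec]
  have hshat : (TV x).mulVec (s + α • ds) = wxs x s + α • (TV x).mulVec ds := by
    rw [Matrix.mulVec_add, Matrix.mulVec_smul]; rfl
  rw [hTinv, hxhat, hshat, hmu α, jmul_add_left, jmul_add_right, jmul_add_right,
    jmul_smul_left, jmul_smul_left, jmul_smul_right, jmul_smul_right, jmul_unitE,
    jmul_unitE, jmul_comm (Ti.mulVec dx) (wxs x s), jmul_eq_mulVec (wxs x s) (Ti.mulVec dx),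
    Matrix.sub_mulVec]
  funext a
  have hka : ((TV x).mulVec ds) a + wxs x s a + ((Rxs x s).mulVec (Ti.mulVec dx)) a
      = ν * muV x s * unitE a := by
    have := congrFun hkey a
    simpa using this
  simp only [Pi.add_apply, Pi.sub_apply, Pi.smul_apply, smul_eq_mul]
  linear_combination α * hka

end SOCP
end

section
/- For all u, v ∈ ℝ^n, ‖u ∘ v‖ ≤ √2 ‖u‖ ‖v‖, where ∘ is the blockwise Jordan product and ‖·‖ is the Euclidean norm. -/
open scoped BigOperators
open Matrix

namespace SOCPAux

/-- Single-block Jordan product norm bound, squared form. -/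
lemma block_bound {m : ℕ} (u v : Fin (m + 1) → ℝ) :
    (∑ j, u j * v j) ^ 2 + ∑ j : Fin m, (u 0 * v j.succ + v 0 * u j.succ) ^ 2
      ≤ 2 * (∑ j, u j ^ 2) * (∑ j, v j ^ 2) := by
  set a := u 0 with ha
  set b := v 0 with hb
  set X := ∑ j : Fin m, u j.succ ^ 2 with hXdef
  set Y := ∑ j : Fin m, v j.succ ^ 2 with hYdef
  set P := ∑ j : Fin m, u j.succ * v j.succ with hPdef
  have hX : 0 ≤ X := Finset.sum_nonneg fun _ _ => sq_nonneg _
  have hY : 0 ≤ Y := Finset.sum_nonneg fun _ _ => sq_nonneg _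
  have hP : P ^ 2 ≤ X * Y :=
    Finset.sum_mul_sq_le_sq_mul_sq Finset.univ (fun j : Fin m => u j.succ)
      (fun j : Fin m => v j.succ)
  have h1 : ∑ j, u j * v j = a * b + P := by rw [Fin.sum_univ_succ]
  have h2 : ∑ j, u j ^ 2 = a ^ 2 + X := by rw [Fin.sum_univ_succ]
  have h3 : ∑ j, v j ^ 2 = b ^ 2 + Y := by rw [Fin.sum_univ_succ]
  have h4 : ∑ j : Fin m, (a * v j.succ + b * u j.succ) ^ 2
      = a ^ 2 * Y + b ^ 2 * X + 2 * a * b * P := by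
    have he : ∀ j : Fin m, (a * v j.succ + b * u j.succ) ^ 2
        = a ^ 2 * v j.succ ^ 2 + b ^ 2 * u j.succ ^ 2
          + 2 * a * b * (u j.succ * v j.succ) := fun j => by ring
    rw [Finset.sum_congr rfl fun j _ => he j, Finset.sum_add_distrib,
      Finset.sum_add_distrib, ← Finset.mul_sum, ← Finset.mul_sum, ← Finset.mul_sum]
  rw [h1, h2, h3, h4]
  have hP' : |P| ≤ Real.sqrt X * Real.sqrt Y := by
    calc |P| = Real.sqrt (P ^ 2) := (Real.sqrt_sq_eq_abs P).symm
      _ ≤ Real.sqrt (X * Y) := Real.sqrt_le_sqrt hP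
      _ = Real.sqrt X * Real.sqrt Y := Real.sqrt_mul hX Y
  have h5 : 2 * a * b * P ≤ a ^ 2 * Y + b ^ 2 * X := by
    have h6 : a * b * P ≤ |a| * |b| * |P| := by
      calc a * b * P ≤ |a * b * P| := le_abs_self _
        _ = |a| * |b| * |P| := by rw [abs_mul, abs_mul]
    nlinarith [sq_nonneg (|a| * Real.sqrt Y - |b| * Real.sqrt X), Real.sq_sqrt hX,
      Real.sq_sqrt hY, abs_nonneg a, abs_nonneg b,
      mul_nonneg (abs_nonneg a) (abs_nonneg b), sq_abs a, sq_abs b, hP']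
  nlinarith [h5, sq_nonneg (a * b - P), hP]

end SOCPAux

namespace SOCP

/-- Lemma 7: `‖u ∘ v‖ ≤ √2 ‖u‖ ‖v‖` for the blockwise Jordan product. -/
theorem jordan_product_norm_bound {k : ℕ} {d : Fin k → ℕ} (u v : Idx d → ℝ) :
    vnorm (jmul u v) ≤ Real.sqrt 2 * vnorm u * vnorm v := by
  have key : ∑ a : Idx d, (jmul u v a) ^ 2
      ≤ 2 * (∑ a : Idx d, u a ^ 2) * (∑ a : Idx d, v a ^ 2) := by
    have hsig : ∀ (f : Idx d → ℝ), ∑ a : Idx d, f a = ∑ i, ∑ j, f ⟨i, j⟩ := by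
      intro f; rw [← Finset.univ_sigma_univ, Finset.sum_sigma]
    rw [hsig, hsig (fun a => u a ^ 2), hsig (fun a => v a ^ 2)]
    set U : Fin k → ℝ := fun i => ∑ j, u ⟨i, j⟩ ^ 2 with hU
    set V : Fin k → ℝ := fun i => ∑ j, v ⟨i, j⟩ ^ 2 with hV
    have hUnn : ∀ i, 0 ≤ U i := fun i => Finset.sum_nonneg fun _ _ => sq_nonneg _
    have hVnn : ∀ i, 0 ≤ V i := fun i => Finset.sum_nonneg fun _ _ => sq_nonneg _
    have hblock : ∀ i : Fin k, ∑ j, (jmul u v ⟨i, j⟩) ^ 2 ≤ 2 * U i * V i := by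
      intro i
      have hsplit : ∑ j, (jmul u v ⟨i, j⟩) ^ 2
          = (∑ j, u ⟨i, j⟩ * v ⟨i, j⟩) ^ 2
            + ∑ j : Fin (d i), (u ⟨i, 0⟩ * v ⟨i, j.succ⟩ + v ⟨i, 0⟩ * u ⟨i, j.succ⟩) ^ 2 := by
        have h0 : jmul u v ⟨i, (0 : Fin (d i + 1))⟩ = ∑ j, u ⟨i, j⟩ * v ⟨i, j⟩ := by
          simp [jmul]
        have hj : ∀ j : Fin (d i), jmul u v ⟨i, j.succ⟩
            = u ⟨i, 0⟩ * v ⟨i, j.succ⟩ + v ⟨i, 0⟩ * u ⟨i, j.succ⟩ := fun j => by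
          simp [jmul, Fin.succ_ne_zero]
        rw [Fin.sum_univ_succ, h0]
        exact congrArg (HAdd.hAdd _) (Finset.sum_congr rfl fun j _ => by rw [hj])
      rw [hsplit]
      exact SOCPAux.block_bound (fun j => u ⟨i, j⟩) (fun j => v ⟨i, j⟩)
    calc ∑ i, ∑ j, (jmul u v ⟨i, j⟩) ^ 2 ≤ ∑ i, 2 * U i * V i :=
          Finset.sum_le_sum fun i _ => hblock i
      _ ≤ ∑ i, 2 * U i * (∑ i', V i') := by
          refine Finset.sum_le_sum fun i _ => ?_
          have : V i ≤ ∑ i', V i' :=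
            Finset.single_le_sum (fun i' _ => hVnn i') (Finset.mem_univ i)
          have h2U : 0 ≤ 2 * U i := by positivity
          exact mul_le_mul_of_nonneg_left this h2U
      _ = 2 * (∑ i, U i) * (∑ i', V i') := by
          rw [← Finset.sum_mul, ← Finset.mul_sum]
          try ring
  have hnn : 0 ≤ ∑ a : Idx d, u a ^ 2 := Finset.sum_nonneg fun _ _ => sq_nonneg _
  have hnn' : 0 ≤ ∑ a : Idx d, v a ^ 2 := Finset.sum_nonneg fun _ _ => sq_nonneg _
  calc vnorm (jmul u v) = Real.sqrt (∑ a, (jmul u v a) ^ 2) := rfl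
    _ ≤ Real.sqrt (2 * (∑ a, u a ^ 2) * (∑ a, v a ^ 2)) := Real.sqrt_le_sqrt key
    _ = Real.sqrt 2 * vnorm u * vnorm v := by
        rw [Real.sqrt_mul (by positivity), Real.sqrt_mul (by norm_num)]
        rfl
end SOCP
end

section
/- Let (x, s) ∈ K × K. If x ∘ s ∈ int(K), then (x, s) ∈ int(K) × int(K). In particular, if √2 ‖x ∘ s − νe‖ ≤ γν for some γ ∈ (0,1) and ν > 0, then (x, s) ∈ int(K) × int(K). -/
open scoped BigOperators
open Matrix

namespace SOCP

/-- Jordan product on a single block. -/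
def jblk {m : ℕ} (a b : Fin (m + 1) → ℝ) : Fin (m + 1) → ℝ :=
  fun j => if j = 0 then ∑ j', a j' * b j' else a 0 * b j + b 0 * a j

lemma tailNormSq_nonneg {m : ℕ} (u : Fin (m + 1) → ℝ) : 0 ≤ tailNormSq u :=
  Finset.sum_nonneg fun _ _ => sq_nonneg _

lemma tailNorm_nonneg {m : ℕ} (u : Fin (m + 1) → ℝ) : 0 ≤ tailNorm u := Real.sqrt_nonneg _

lemma sq_tailNorm {m : ℕ} (u : Fin (m + 1) → ℝ) : tailNorm u ^ 2 = tailNormSq u :=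
  Real.sq_sqrt (tailNormSq_nonneg u)

/-- If `a` is on the boundary of the cone, the Jordan product is not in the interior. -/
lemma aux_boundary {m : ℕ} (a b : Fin (m + 1) → ℝ) (ha : tailNormSq a = a 0 ^ 2) :
    jblk a b 0 ≤ tailNorm (jblk a b) := by
  have h0 : jblk a b 0 = a 0 * b 0 + ∑ j : Fin m, a j.succ * b j.succ := by
    simp [jblk, Fin.sum_univ_succ]
  have htail : tailNormSq (jblk a b)
      = a 0 ^ 2 * tailNormSq b + b 0 ^ 2 * tailNormSq a
        + 2 * (a 0) * (b 0) * ∑ j : Fin m, a j.succ * b j.succ := by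
    simp only [tailNormSq, jblk, Fin.succ_ne_zero, if_false]
    rw [Finset.mul_sum, Finset.mul_sum, Finset.mul_sum, ← Finset.sum_add_distrib,
      ← Finset.sum_add_distrib]
    exact Finset.sum_congr rfl fun j _ => by ring
  have hCS : (∑ j : Fin m, a j.succ * b j.succ) ^ 2 ≤ tailNormSq a * tailNormSq b :=
    Finset.sum_mul_sq_le_sq_mul_sq _ _ _
  have hsq : (jblk a b 0) ^ 2 ≤ tailNormSq (jblk a b) := by
    rw [ha] at hCS
    rw [h0, htail, ha]
    nlinarith [hCS]
  calc jblk a b 0 ≤ |jblk a b 0| := le_abs_self _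
    _ = Real.sqrt ((jblk a b 0) ^ 2) := (Real.sqrt_sq_eq_abs _).symm
    _ ≤ tailNorm (jblk a b) := Real.sqrt_le_sqrt hsq

lemma blk_jmul {k : ℕ} {d : Fin k → ℕ} (x s : Idx d → ℝ) (i : Fin k) :
    blk (jmul x s) i = jblk (blk x i) (blk s i) := by
  funext j
  simp [blk, jmul, jblk]

lemma jmul_comm_s15 {k : ℕ} {d : Fin k → ℕ} (x s : Idx d → ℝ) : jmul x s = jmul s x := by
  funext a
  simp only [jmul]
  split
  · exact Finset.sum_congr rfl fun j _ => mul_comm _ _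
  · ring

lemma int_left {k : ℕ} {d : Fin k → ℕ} (x s : Idx d → ℝ) (hx : inK x)
    (h : inIntK (jmul x s)) : inIntK x := by
  intro i
  by_contra hlt
  push_neg at hlt
  have heq : tailNorm (blk x i) = x ⟨i, 0⟩ := le_antisymm (hx i) hlt
  have hsq : tailNormSq (blk x i) = blk x i 0 ^ 2 := by
    have h1 : blk x i 0 = x ⟨i, 0⟩ := rfl
    rw [← sq_tailNorm, heq, h1]
  have hb := aux_boundary (blk x i) (blk s i) hsq
  have h2 := h i
  rw [blk_jmul] at h2
  have h3 : jblk (blk x i) (blk s i) 0 = jmul x s ⟨i, 0⟩ := by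
    rw [← blk_jmul]; rfl
  rw [h3] at hb
  exact absurd h2 (not_lt.mpr hb)

/-- Lemma 10: interior-point condition from the Jordan product. -/
theorem interior_from_jordan_product {k : ℕ} {d : Fin k → ℕ}
    (x s : Idx d → ℝ) (hx : inK x) (hs : inK s) :
    (inIntK (jmul x s) → inIntK x ∧ inIntK s) ∧
    (∀ γ ν : ℝ, 0 < γ → γ < 1 → 0 < ν →
      Real.sqrt 2 * vnorm (jmul x s - ν • unitE) ≤ γ * ν →
      inIntK x ∧ inIntK s) := by
  have key : inIntK (jmul x s) → inIntK x ∧ inIntK s := by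
    intro h
    refine ⟨int_left x s hx h, int_left s x hs ?_⟩
    rwa [← jmul_comm_s15]
  refine ⟨key, ?_⟩
  intro γ ν hγ0 hγ1 hν hle
  apply key
  intro i
  set w : Idx d → ℝ := jmul x s - ν • unitE with hw
  have hS : 0 ≤ ∑ a, w a ^ 2 := Finset.sum_nonneg fun _ _ => sq_nonneg _
  have h2S : 2 * (∑ a, w a ^ 2) ≤ (γ * ν) ^ 2 := by
    have hnn : 0 ≤ Real.sqrt 2 * vnorm w := by
      exact mul_nonneg (Real.sqrt_nonneg _) (Real.sqrt_nonneg _)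
    have h1 := mul_self_le_mul_self hnn hle
    have h2 : (Real.sqrt 2 * vnorm w) * (Real.sqrt 2 * vnorm w)
        = 2 * (∑ a, w a ^ 2) := by
      have ha := Real.mul_self_sqrt (show (0:ℝ) ≤ 2 by norm_num)
      have hb := Real.mul_self_sqrt hS
      calc (Real.sqrt 2 * vnorm w) * (Real.sqrt 2 * vnorm w)
          = (Real.sqrt 2 * Real.sqrt 2) * (vnorm w * vnorm w) := by ring
        _ = 2 * (∑ a, w a ^ 2) := by rw [ha, vnorm, hb]
    rw [h2] at h1
    calc 2 * (∑ a, w a ^ 2) ≤ γ * ν * (γ * ν) := h1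
      _ = (γ * ν) ^ 2 := by ring
  have hsum : ∑ a, w a ^ 2 = ∑ i' : Fin k, ∑ j : Fin (d i' + 1), w ⟨i', j⟩ ^ 2 := by
    rw [← Finset.univ_sigma_univ, Finset.sum_sigma]
  have hterm : ∀ i' : Fin k, ∑ j : Fin (d i' + 1), w ⟨i', j⟩ ^ 2
      = (jmul x s ⟨i', 0⟩ - ν) ^ 2 + tailNormSq (blk (jmul x s) i') := by
    intro i'
    rw [Fin.sum_univ_succ]
    congr 1
    · simp [hw, unitE]
    · refine Finset.sum_congr rfl fun j _ => ?_
      simp [hw, unitE, Fin.succ_ne_zero, blk]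
  have hblock : (jmul x s ⟨i, 0⟩ - ν) ^ 2 + tailNormSq (blk (jmul x s) i)
      ≤ ∑ a, w a ^ 2 := by
    rw [hsum, ← hterm i]
    exact Finset.single_le_sum (f := fun i' => ∑ j : Fin (d i' + 1), w ⟨i', j⟩ ^ 2)
      (fun i' _ => Finset.sum_nonneg fun _ _ => sq_nonneg _) (Finset.mem_univ i)
  set c0 := jmul x s ⟨i, 0⟩
  set B := tailNorm (blk (jmul x s) i) with hB
  have hB0 : 0 ≤ B := tailNorm_nonneg _
  have hB2 : B ^ 2 = tailNormSq (blk (jmul x s) i) := sq_tailNorm _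
  have hγ2 : γ ^ 2 < 1 := by nlinarith
  have hγν : γ ^ 2 * ν ^ 2 < ν ^ 2 := by nlinarith [mul_pos hν hν, hγ2]
  show B < c0
  nlinarith [hblock, h2S, hB0, hγν, sq_nonneg (ν - c0 - B), sq_nonneg (ν - c0 + B)]

end SOCP
end

section
/- Consider a current SOCP with data (A, b) and a previous SOCP with data (A_o, b_o), with ΔA = A − A_o and Δb = b − b_o, and let (x_o, y_o, s_o) be any point for the previous problem with previous primal residual r_p^o = A_o x_o − b_o. Let q_c = (e, 0, e, 1, 1) be the cold-starting point and q_w the warm-starting point with x_w = ω x_o + (1−ω) e and τ_w = 1, for ω ∈ [0,1]. If ‖ΔA‖ ‖x_o‖ ≤ c_A ‖r_p(q_c)‖, ‖Δb‖ ≤ c_b ‖r_p(q_c)‖, ‖r_p^o‖ ≤ c_p ‖r_p(q_c)‖, and c_A + c_b + c_p ≤ 1, then ‖r_p(q_w)‖ ≤ (1 − ω(1 − c_A − c_b − c_p)) ‖r_p(q_c)‖. -/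
open scoped BigOperators
open Matrix

namespace SOCP

private lemma vnorm_eq_norm {ι : Type*} [Fintype ι] (v : ι → ℝ) :
    vnorm v = ‖(WithLp.equiv 2 (ι → ℝ)).symm v‖ := by
  simp [vnorm, EuclideanSpace.norm_eq, sq_abs]

private lemma vnorm_add_le {ι : Type*} [Fintype ι] (u v : ι → ℝ) :
    vnorm (u + v) ≤ vnorm u + vnorm v := by
  simp only [vnorm_eq_norm]
  have : (WithLp.equiv 2 (ι → ℝ)).symm (u + v)
      = (WithLp.equiv 2 (ι → ℝ)).symm u + (WithLp.equiv 2 (ι → ℝ)).symm v := rfl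
  rw [this]; exact norm_add_le _ _

private lemma vnorm_smul {ι : Type*} [Fintype ι] (c : ℝ) (v : ι → ℝ) :
    vnorm (c • v) = |c| * vnorm v := by
  simp only [vnorm_eq_norm]
  have : (WithLp.equiv 2 (ι → ℝ)).symm (c • v)
      = c • (WithLp.equiv 2 (ι → ℝ)).symm v := rfl
  rw [this, norm_smul]; simp

private lemma vnorm_nonneg {ι : Type*} [Fintype ι] (v : ι → ℝ) : 0 ≤ vnorm v := by
  rw [vnorm_eq_norm]; exact norm_nonneg _

private lemma vnorm_mulVec_le {m n : Type*} [Fintype m] [Fintype n] [DecidableEq n]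
    (M : Matrix m n ℝ) (v : n → ℝ) :
    vnorm (M.mulVec v) ≤ op2 M * vnorm v := by
  simp only [vnorm_eq_norm, op2]
  have h : (WithLp.equiv 2 (m → ℝ)).symm (M.mulVec v)
      = (LinearMap.toContinuousLinearMap (Matrix.toEuclideanLin M))
          ((WithLp.equiv 2 (n → ℝ)).symm v) := by
    simp [Matrix.toEuclideanLin]
  rw [h]
  exact ContinuousLinearMap.le_opNorm _ _

/-- Warm starting improves the primal residual: if the previous primal residual and the
problem-data differences are small, the warm-started primal residual is reduced by the
factor `1 - ω(1 - c_A - c_b - c_p)` relative to cold starting. -/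
theorem warm_start_primal_residual {k p : ℕ} {d : Fin k → ℕ}
    (A Ao : Matrix (Fin p) (Idx d) ℝ) (b bo : Fin p → ℝ)
    (xo so : Idx d → ℝ) (yo : Fin p → ℝ)
    (ω cA cb cp : ℝ) (hω : ω ∈ Set.Icc (0 : ℝ) 1)
    (hA : op2 (A - Ao) * vnorm xo ≤ cA * vnorm (A.mulVec unitE - b))
    (hb : vnorm (b - bo) ≤ cb * vnorm (A.mulVec unitE - b))
    (hrp : vnorm (Ao.mulVec xo - bo) ≤ cp * vnorm (A.mulVec unitE - b))
    (hsum : cA + cb + cp ≤ 1) :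
    vnorm (A.mulVec (ω • xo + (1 - ω) • unitE) - b)
      ≤ (1 - ω * (1 - cA - cb - cp)) * vnorm (A.mulVec unitE - b) := by
  obtain ⟨hω0, hω1⟩ := hω
  set R := vnorm (A.mulVec unitE - b) with hR
  have hRnn : 0 ≤ R := vnorm_nonneg _
  have key : A.mulVec (ω • xo + (1 - ω) • unitE) - b
      = ω • ((A - Ao).mulVec xo) + ω • (Ao.mulVec xo - bo) + ω • (bo - b)
        + (1 - ω) • (A.mulVec unitE - b) := by
    funext a
    simp [Matrix.mulVec_add, Matrix.mulVec_smul, Matrix.sub_mulVec]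
    ring
  have hΔA : vnorm ((A - Ao).mulVec xo) ≤ cA * R := by
    calc vnorm ((A - Ao).mulVec xo) ≤ op2 (A - Ao) * vnorm xo := vnorm_mulVec_le _ _
    _ ≤ cA * R := hA
  have hbo : vnorm (bo - b) ≤ cb * R := by
    have : bo - b = -(b - bo) := by funext a; simp
    rw [this]
    have : vnorm (-(b - bo)) = vnorm (b - bo) := by
      have := vnorm_smul (-1 : ℝ) (b - bo)
      simpa using this
    rw [this]; exact hb
  calc vnorm (A.mulVec (ω • xo + (1 - ω) • unitE) - b)
      = vnorm (ω • ((A - Ao).mulVec xo) + ω • (Ao.mulVec xo - bo) + ω • (bo - b)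
        + (1 - ω) • (A.mulVec unitE - b)) := by rw [key]
    _ ≤ vnorm (ω • ((A - Ao).mulVec xo) + ω • (Ao.mulVec xo - bo) + ω • (bo - b))
        + vnorm ((1 - ω) • (A.mulVec unitE - b)) := vnorm_add_le _ _
    _ ≤ (vnorm (ω • ((A - Ao).mulVec xo) + ω • (Ao.mulVec xo - bo)) + vnorm (ω • (bo - b)))
        + vnorm ((1 - ω) • (A.mulVec unitE - b)) := by
        gcongr; exact vnorm_add_le _ _
    _ ≤ ((vnorm (ω • ((A - Ao).mulVec xo)) + vnorm (ω • (Ao.mulVec xo - bo)))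
          + vnorm (ω • (bo - b)))
        + vnorm ((1 - ω) • (A.mulVec unitE - b)) := by
        gcongr; exact vnorm_add_le _ _
    _ = ω * vnorm ((A - Ao).mulVec xo) + ω * vnorm (Ao.mulVec xo - bo)
        + ω * vnorm (bo - b) + (1 - ω) * vnorm (A.mulVec unitE - b) := by
        rw [vnorm_smul, vnorm_smul, vnorm_smul, vnorm_smul,
          abs_of_nonneg hω0, abs_of_nonneg (by linarith : (0:ℝ) ≤ 1 - ω)]
    _ ≤ ω * (cA * R) + ω * (cp * R) + ω * (cb * R) + (1 - ω) * R := by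
        have h1 := mul_le_mul_of_nonneg_left hΔA hω0
        have h2 := mul_le_mul_of_nonneg_left hrp hω0
        have h3 := mul_le_mul_of_nonneg_left hbo hω0
        linarith
    _ = (1 - ω * (1 - cA - cb - cp)) * R := by ring

end SOCP
end
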